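/- Let (V, Φ) be a reduced irreducible root system with base Δ and let α ∈ Δ. If α is special or co-special, then the unique Δ-dominant element of W·α equals the unique (Δ \ {α})-dominant element of W_α·α; equivalently, there exists w ∈ W_α such that w·α is Δ-dominant. -/

import Mathlib

open scoped BigOperators

/-- A reduced irreducible root system, with a choice of base of simple roots,
in a finite-dimensional `ℚ`-vector space `V` equipped with a positive definite
symmetric bilinear form. -/
structure RootSystemBase (V : Type*) [AddCommGroup V] [Module ℚ V] : Type _ where
  /-- the symmetric bilinear form `( , )` -/
  B : V →ₗ[ℚ] V →ₗ[ℚ] ℚ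
  B_symm : ∀ u v : V, B u v = B v u
  B_posdef : ∀ v : V, v ≠ 0 → 0 < B v v
  /-- the (finite) set of roots -/
  Φ : Finset V
  zero_notMem : (0 : V) ∉ Φ
  span_top : Submodule.span ℚ (Φ : Set V) = ⊤
  reflect_mem : ∀ β ∈ Φ, ∀ γ ∈ Φ, γ - (2 * B β γ / B β β) • β ∈ Φ
  integral : ∀ β ∈ Φ, ∀ γ ∈ Φ, ∃ n : ℤ, 2 * B β γ / B β β = (n : ℚ)
  reduced : ∀ β ∈ Φ, ∀ c : ℚ, c • β ∈ Φ → c = 1 ∨ c = -1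
  irreducible : ∀ s ⊆ Φ, s.Nonempty →
    (∀ β ∈ s, ∀ γ ∈ Φ, γ ∉ s → B β γ = 0) → s = Φ
  /-- the base of simple roots -/
  Δ : Finset V
  Δ_sub : Δ ⊆ Φ
  Δ_indep : LinearIndependent ℚ (Subtype.val : {x : V // x ∈ Δ} → V)
  /-- `coord v α` is the coefficient of the simple root `α` when `v` is written in the basis `Δ` -/
  coord : V → V → ℚ
  coord_spec : ∀ v : V, v = ∑ α ∈ Δ, coord v α • α
  coord_int : ∀ β ∈ Φ, ∀ α ∈ Δ, ∃ n : ℤ, coord β α = (n : ℚ)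
  pos_or_neg : ∀ β ∈ Φ, (∀ α ∈ Δ, 0 ≤ coord β α) ∨ (∀ α ∈ Δ, coord β α ≤ 0)

namespace RootSystemBase

variable {V : Type*} [AddCommGroup V] [Module ℚ V] (P : RootSystemBase V)

/-- the coroot `β^∨ = 2β/(β,β)` -/
noncomputable def coroot (β : V) : V := (2 / P.B β β) • β

/-- `m^∨_β(α)`: the coefficient of `α^∨` when `β^∨` is written in the basis `Δ^∨` -/
noncomputable def corootMult (β α : V) : ℚ := P.coord (P.coroot β) α * (P.B α α / 2)

/-- the positive roots `Φ⁺` determined by the base `Δ` -/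
noncomputable def posRoots : Finset V := P.Φ.filter (fun β => ∀ α ∈ P.Δ, 0 ≤ P.coord β α)

/-- a root is long if its length is maximal -/
def IsLong (β : V) : Prop := ∀ γ ∈ P.Φ, P.B γ γ ≤ P.B β β

/-- a root is short if its length is minimal -/
def IsShort (β : V) : Prop := ∀ γ ∈ P.Φ, P.B β β ≤ P.B γ γ

/-- `h` is the highest root: every (positive) root has smaller multiplicities -/
def IsHighestRoot (h : V) : Prop :=
  h ∈ P.Φ ∧ ∀ β ∈ P.posRoots, ∀ α ∈ P.Δ, P.coord β α ≤ P.coord h α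

/-- `h₂` is the root whose coroot is the highest root of the dual system `Φ^∨` -/
def IsDualHighest (h₂ : V) : Prop :=
  h₂ ∈ P.Φ ∧ ∀ β ∈ P.posRoots, ∀ α ∈ P.Δ, P.corootMult β α ≤ P.corootMult h₂ α

/-- a simple root `α` is special if `m_{α^h}(α) = 1` -/
def IsSpecial (α : V) : Prop :=
  α ∈ P.Δ ∧ ∀ h : V, P.IsHighestRoot h → P.coord h α = 1

/-- a simple root `α` is co-special if `m^∨_{α^{h₂}}(α) = 1` -/
def IsCospecial (α : V) : Prop :=
  α ∈ P.Δ ∧ ∀ h₂ : V, P.IsDualHighest h₂ → P.corootMult h₂ α = 1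

/-- the reflection `s_β` in a root `β` (junk value `id` if `(β,β) = 0`) -/
noncomputable def refl (β : V) : V ≃ₗ[ℚ] V :=
  if h : P.B β β ≠ 0 then
    Module.reflection (x := β) (f := (2 / P.B β β) • P.B β)
      (by simp only [LinearMap.smul_apply, smul_eq_mul]; field_simp)
  else LinearEquiv.refl ℚ V

/-- the Weyl group `W`, as a group of linear automorphisms of `V` -/
noncomputable def weylGroup : Subgroup (V ≃ₗ[ℚ] V) :=
  Subgroup.closure { g | ∃ β ∈ P.Φ, g = P.refl β }

/-- the Weyl group `W_α` of the maximal Levi determined by `α ∈ Δ`, generated by the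
simple reflections `s_{α'}`, `α' ∈ Δ \ {α}` -/
noncomputable def leviWeyl (α : V) : Subgroup (V ≃ₗ[ℚ] V) :=
  Subgroup.closure { g | ∃ α' ∈ P.Δ, α' ≠ α ∧ g = P.refl α' }

/-- `v` is `Δ`-dominant -/
def IsDominant (v : V) : Prop := ∀ α ∈ P.Δ, 0 ≤ P.B v α

/-- `v` is `(Δ \ {α})`-dominant -/
def IsDominantAway (α v : V) : Prop := ∀ α' ∈ P.Δ, α' ≠ α → 0 ≤ P.B v α'

/-- `χ` is quasi-constant -/
def IsQuasiConstant (χ : V) : Prop :=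
  ∀ β ∈ P.Φ, P.B χ (P.coroot β) ≠ 0 → ∀ w ∈ P.weylGroup,
    P.B χ (w (P.coroot β)) / P.B χ (P.coroot β) ∈ ({-1, 0, 1} : Set ℚ)

end RootSystemBase

namespace RootSystemBase

variable {V : Type*} [AddCommGroup V] [Module ℚ V] (P : RootSystemBase V)


lemma root_ne_zero {β : V} (hβ : β ∈ P.Φ) : β ≠ 0 := fun h => P.zero_notMem (h ▸ hβ)

lemma B_root_pos {β : V} (hβ : β ∈ P.Φ) : 0 < P.B β β := P.B_posdef β (P.root_ne_zero hβ)

lemma B_root_ne {β : V} (hβ : β ∈ P.Φ) : P.B β β ≠ 0 := (P.B_root_pos hβ).ne'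

lemma neg_mem {β : V} (hβ : β ∈ P.Φ) : -β ∈ P.Φ := by
  have h := P.reflect_mem β hβ β hβ
  rw [show 2 * P.B β β / P.B β β = 2 by field_simp [P.B_root_ne hβ]] at h
  have : β - (2:ℚ) • β = -β := by module
  rwa [this] at h

lemma coord_ext {f g : V → ℚ} (h : ∑ a ∈ P.Δ, f a • a = ∑ a ∈ P.Δ, g a • a) :
    ∀ a ∈ P.Δ, f a = g a := by
  have hsum : ∑ a ∈ P.Δ.attach, (f a.1 - g a.1) • a.1 = 0 := by
    rw [Finset.sum_attach P.Δ (fun a => (f a - g a) • a)]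
    simp only [sub_smul, Finset.sum_sub_distrib, h, sub_self]
  intro a ha
  have h0 : f a - g a = 0 := linearIndependent_iff'.mp P.Δ_indep P.Δ.attach
    (fun x => f x.1 - g x.1) hsum ⟨a, ha⟩ (Finset.mem_attach _ _)
  linarith

lemma eq_coords {v : V} {f : V → ℚ} (h : v = ∑ a ∈ P.Δ, f a • a) :
    ∀ a ∈ P.Δ, P.coord v a = f a :=
  P.coord_ext ((P.coord_spec v).symm.trans h)

lemma eq_of_coord_eq {u v : V} (h : ∀ a ∈ P.Δ, P.coord u a = P.coord v a) : u = v := by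
  rw [P.coord_spec u, P.coord_spec v]
  exact Finset.sum_congr rfl fun a ha => by rw [h a ha]

open Classical in
lemma coord_simple {a b : V} (ha : a ∈ P.Δ) (hb : b ∈ P.Δ) :
    P.coord a b = if b = a then 1 else 0 := by
  refine P.eq_coords (f := fun x => if x = a then 1 else 0) ?_ b hb
  simp only [ite_smul, one_smul, zero_smul]
  rw [Finset.sum_ite_eq' P.Δ a (fun x => x)]
  simp [ha]

lemma coord_self {a : V} (ha : a ∈ P.Δ) : P.coord a a = 1 := by
  classical
  simp [P.coord_simple ha ha]

lemma coord_simple_ne {a b : V} (ha : a ∈ P.Δ) (hb : b ∈ P.Δ) (hne : b ≠ a) :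
    P.coord a b = 0 := by
  classical
  simp [P.coord_simple ha hb, hne]

lemma coord_add (u v : V) {a : V} (ha : a ∈ P.Δ) :
    P.coord (u + v) a = P.coord u a + P.coord v a := by
  refine P.eq_coords (f := fun x => P.coord u x + P.coord v x) ?_ a ha
  conv_lhs => rw [P.coord_spec u, P.coord_spec v]
  rw [← Finset.sum_add_distrib]
  exact Finset.sum_congr rfl fun x _ => (add_smul _ _ _).symm

lemma coord_smul (c : ℚ) (v : V) {a : V} (ha : a ∈ P.Δ) :
    P.coord (c • v) a = c * P.coord v a := by
  refine P.eq_coords (f := fun x => c * P.coord v x) ?_ a ha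
  conv_lhs => rw [P.coord_spec v]
  rw [Finset.smul_sum]
  exact Finset.sum_congr rfl fun x _ => (mul_smul _ _ _).symm

lemma coord_neg (v : V) {a : V} (ha : a ∈ P.Δ) : P.coord (-v) a = -P.coord v a := by
  have := P.coord_smul (-1) v ha
  simpa using this

lemma coord_sub (u v : V) {a : V} (ha : a ∈ P.Δ) :
    P.coord (u - v) a = P.coord u a - P.coord v a := by
  rw [sub_eq_add_neg, P.coord_add u (-v) ha, P.coord_neg v ha, sub_eq_add_neg]

lemma B_eq_sum_left (v γ : V) : P.B v γ = ∑ a ∈ P.Δ, P.coord v a * P.B a γ := by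
  conv_lhs => rw [P.coord_spec v]
  simp [smul_eq_mul]

lemma B_eq_sum_right (v γ : V) : P.B γ v = ∑ a ∈ P.Δ, P.coord v a * P.B γ a := by
  conv_lhs => rw [P.coord_spec v]
  simp [smul_eq_mul]

lemma refl_apply {β : V} (hβ : P.B β β ≠ 0) (v : V) :
    P.refl β v = v - (2 * P.B β v / P.B β β) • β := by
  rw [refl, dif_pos hβ, Module.reflection_apply]
  congr 2
  simp only [LinearMap.smul_apply, smul_eq_mul]
  ring

lemma refl_inv (β : V) : (P.refl β)⁻¹ = P.refl β := by
  unfold refl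
  split
  · exact Module.reflection_symm _
  · rfl

lemma refl_isometry (β : V) (u v : V) : P.B (P.refl β u) (P.refl β v) = P.B u v := by
  by_cases hβ : P.B β β ≠ 0
  · rw [P.refl_apply hβ, P.refl_apply hβ]
    simp only [map_sub, map_smul, LinearMap.sub_apply, LinearMap.smul_apply, smul_eq_mul]
    rw [P.B_symm u β]
    field_simp
    ring
  · rw [refl, dif_neg hβ]; rfl

lemma refl_root_mem {β γ : V} (hβ : β ∈ P.Φ) (hγ : γ ∈ P.Φ) : P.refl β γ ∈ P.Φ := by
  rw [P.refl_apply (P.B_root_ne hβ)]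
  exact P.reflect_mem β hβ γ hγ

lemma refl_mem_weyl {β : V} (hβ : β ∈ P.Φ) : P.refl β ∈ P.weylGroup :=
  Subgroup.subset_closure ⟨β, hβ, rfl⟩

lemma weyl_isometry {w : V ≃ₗ[ℚ] V} (hw : w ∈ P.weylGroup) :
    ∀ u v, P.B (w u) (w v) = P.B u v := by
  induction hw using Subgroup.closure_induction with
  | mem x hx => obtain ⟨β, hβ, rfl⟩ := hx; exact P.refl_isometry β
  | one => intro u v; rfl
  | mul x y hx hy ihx ihy =>
      intro u v
      have : ∀ z, (x * y) z = x (y z) := fun z => rfl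
      rw [this, this, ihx, ihy]
  | inv x hx ih =>
      intro u v
      have h1 : x (x⁻¹ u) = u := x.apply_symm_apply u
      have h2 : x (x⁻¹ v) = v := x.apply_symm_apply v
      calc P.B (x⁻¹ u) (x⁻¹ v) = P.B (x (x⁻¹ u)) (x (x⁻¹ v)) := (ih _ _).symm
    _ = P.B u v := by rw [h1, h2]

lemma weyl_maps_root {w : V ≃ₗ[ℚ] V} (hw : w ∈ P.weylGroup) :
    ∀ β ∈ P.Φ, w β ∈ P.Φ := by
  suffices h : (∀ β ∈ P.Φ, w β ∈ P.Φ) ∧ (∀ β ∈ P.Φ, w⁻¹ β ∈ P.Φ) from h.1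
  induction hw using Subgroup.closure_induction with
  | mem x hx =>
      obtain ⟨β, hβ, rfl⟩ := hx
      refine ⟨fun γ hγ => P.refl_root_mem hβ hγ, ?_⟩
      rw [P.refl_inv]
      exact fun γ hγ => P.refl_root_mem hβ hγ
  | one => exact ⟨fun β hβ => hβ, fun β hβ => hβ⟩
  | mul x y hx hy ihx ihy =>
      constructor
      · intro β hβ
        have : (x * y) β = x (y β) := rfl
        rw [this]; exact ihx.1 _ (ihy.1 _ hβ)
      · intro β hβ
        rw [mul_inv_rev]
        have : (y⁻¹ * x⁻¹) β = y⁻¹ (x⁻¹ β) := rfl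
        rw [this]; exact ihy.2 _ (ihx.2 _ hβ)
  | inv x hx ih =>
      refine ⟨ih.2, ?_⟩
      rw [inv_inv]; exact ih.1

lemma levi_le_weyl (α : V) : P.leviWeyl α ≤ P.weylGroup := by
  apply Subgroup.closure_mono
  rintro g ⟨a, ha, _, rfl⟩
  exact ⟨a, P.Δ_sub ha, rfl⟩

lemma levi_coord {α : V} (hαΔ : α ∈ P.Δ) {w : V ≃ₗ[ℚ] V} (hw : w ∈ P.leviWeyl α) :
    ∀ v, P.coord (w v) α = P.coord v α := by
  induction hw using Subgroup.closure_induction with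
  | mem x hx =>
      obtain ⟨a, ha, hne, rfl⟩ := hx
      intro v
      rw [P.refl_apply (P.B_root_ne (P.Δ_sub ha)), P.coord_sub _ _ hαΔ, P.coord_smul _ _ hαΔ,
        P.coord_simple_ne ha hαΔ (fun h => hne h.symm)]
      ring
  | one => intro v; rfl
  | mul x y hx hy ihx ihy =>
      intro v
      have hxy : (x * y) v = x (y v) := rfl
      rw [hxy, ihx, ihy]
  | inv x hx ih =>
      intro v
      have h1 : x (x⁻¹ v) = v := x.apply_symm_apply v
      calc P.coord (x⁻¹ v) α = P.coord (x (x⁻¹ v)) α := (ih _).symm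
        _ = P.coord v α := by rw [h1]

lemma cs_strict {β γ : V} (hβ : β ∈ P.Φ) (hγ : γ ∈ P.Φ) (h1 : β ≠ γ) (h2 : β ≠ -γ) :
    (P.B β γ)^2 < P.B β β * P.B γ γ := by
  have hγγ := P.B_root_pos hγ
  set t : ℚ := P.B β γ / P.B γ γ with ht
  have hx : β - t • γ ≠ 0 := by
    intro h
    have hb : β = t • γ := by rwa [sub_eq_zero] at h
    rcases P.reduced γ hγ t (hb ▸ hβ) with h' | h'
    · exact h1 (by rw [hb, h', one_smul])
    · refine h2 ?_
      rw [hb, h']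
      module
  have hpos := P.B_posdef _ hx
  have hexp : P.B (β - t • γ) (β - t • γ) = P.B β β - (P.B β γ)^2 / P.B γ γ := by
    simp only [map_sub, map_smul, LinearMap.sub_apply, LinearMap.smul_apply, smul_eq_mul, ht]
    rw [P.B_symm γ β]
    field_simp
    ring
  rw [hexp, sub_pos, div_lt_iff₀ hγγ] at hpos
  linarith

lemma sub_mem_of_B_pos {β γ : V} (hβ : β ∈ P.Φ) (hγ : γ ∈ P.Φ) (hpos : 0 < P.B β γ)
    (hne : β ≠ γ) : β - γ ∈ P.Φ := by
  have hBβ := P.B_root_pos hβ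
  have hBγ := P.B_root_pos hγ
  have hβγ : β ≠ -γ := by
    intro h
    rw [h] at hpos
    have hh : P.B (-γ) γ = -P.B γ γ := by simp
    rw [hh] at hpos
    linarith
  obtain ⟨n, hn⟩ := P.integral β hβ γ hγ
  obtain ⟨m, hm⟩ := P.integral γ hγ β hβ
  have hn0 : (0:ℚ) < (n:ℚ) := by rw [← hn]; positivity
  have hm0 : (0:ℚ) < (m:ℚ) := by
    rw [← hm, P.B_symm γ β]; positivity
  have hcs := P.cs_strict hβ hγ hne hβγ
  have hprod : (n:ℚ) * (m:ℚ) < 4 := by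
    rw [← hn, ← hm, P.B_symm γ β]
    have he : 2 * P.B β γ / P.B β β * (2 * P.B β γ / P.B γ γ)
        = 4 * (P.B β γ)^2 / (P.B β β * P.B γ γ) := by
      field_simp
      ring
    rw [he, div_lt_iff₀ (by positivity)]
    nlinarith
  have hn1 : 1 ≤ n := by exact_mod_cast hn0
  have hm1 : 1 ≤ m := by exact_mod_cast hm0
  have hnm : n * m < 4 := by exact_mod_cast hprod
  have hcase : n = 1 ∨ m = 1 := by
    by_contra hc
    push_neg at hc
    have h2n : 2 ≤ n := by omega
    have h2m : 2 ≤ m := by omega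
    nlinarith
  rcases hcase with h | h
  · have hmem := P.reflect_mem β hβ γ hγ
    rw [hn, h] at hmem
    have hh : γ - ((1:ℤ):ℚ) • β = -(β - γ) := by push_cast; module
    rw [hh] at hmem
    have := P.neg_mem hmem
    rwa [neg_neg] at this
  · have hmem := P.reflect_mem γ hγ β hβ
    rw [hm, h] at hmem
    have hh : β - ((1:ℤ):ℚ) • γ = β - γ := by push_cast; module
    rwa [hh] at hmem

lemma simple_B_nonpos {a b : V} (ha : a ∈ P.Δ) (hb : b ∈ P.Δ) (hne : a ≠ b) :
    P.B a b ≤ 0 := by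
  by_contra h
  push_neg at h
  have hmem := P.sub_mem_of_B_pos (P.Δ_sub ha) (P.Δ_sub hb) h hne
  rcases P.pos_or_neg _ hmem with hp | hn
  · have hc := hp b hb
    rw [P.coord_sub _ _ hb, P.coord_simple_ne ha hb (Ne.symm hne), P.coord_self hb] at hc
    linarith
  · have hc := hn a ha
    rw [P.coord_sub _ _ ha, P.coord_self ha, P.coord_simple_ne hb ha hne] at hc
    linarith

/-- the height of a vector: the sum of its coordinates -/
noncomputable def ht (v : V) : ℚ := ∑ a ∈ P.Δ, P.coord v a

lemma ht_simple {a : V} (ha : a ∈ P.Δ) : P.ht a = 1 := by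
  classical
  unfold ht
  rw [Finset.sum_congr rfl (fun x hx => P.coord_simple ha hx)]
  simp [ha]

lemma ht_sub_smul (v : V) (c : ℚ) {a : V} (ha : a ∈ P.Δ) :
    P.ht (v - c • a) = P.ht v - c := by
  unfold ht
  rw [Finset.sum_congr rfl (fun x hx => by
    rw [P.coord_sub _ _ hx, P.coord_smul _ _ hx]), Finset.sum_sub_distrib, ← Finset.mul_sum]
  have := P.ht_simple ha
  unfold ht at this
  rw [this, mul_one]

lemma coord_zero {a : V} (ha : a ∈ P.Δ) : P.coord 0 a = 0 := by
  refine P.eq_coords (f := fun _ => 0) ?_ a ha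
  simp

lemma mem_posRoots {β : V} :
    β ∈ P.posRoots ↔ β ∈ P.Φ ∧ ∀ a ∈ P.Δ, 0 ≤ P.coord β a := Finset.mem_filter

lemma simple_mem_posRoots {a : V} (ha : a ∈ P.Δ) : a ∈ P.posRoots := by
  classical
  refine P.mem_posRoots.mpr ⟨P.Δ_sub ha, fun b hb => ?_⟩
  rw [P.coord_simple ha hb]
  split <;> norm_num

lemma neg_mem_posRoots {β : V} (hβ : β ∈ P.Φ) (hneg : β ∉ P.posRoots) :
    -β ∈ P.posRoots := by
  refine P.mem_posRoots.mpr ⟨P.neg_mem hβ, fun a ha => ?_⟩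
  rcases P.pos_or_neg β hβ with hp | hn
  · exact absurd (P.mem_posRoots.mpr ⟨hβ, hp⟩) hneg
  · rw [P.coord_neg _ ha]
    linarith [hn a ha]

/-- reflecting a positive root in a simple root pairing negatively with it
increases the height and all coordinates -/
lemma reflect_up {β : V} (hβ : β ∈ P.posRoots) {a : V} (ha : a ∈ P.Δ)
    (hneg : P.B β a < 0) :
    P.refl a β ∈ P.posRoots ∧ P.ht β < P.ht (P.refl a β) ∧
      (∀ b ∈ P.Δ, P.coord β b ≤ P.coord (P.refl a β) b) := by
  classical
  obtain ⟨hβΦ, hβpos⟩ := P.mem_posRoots.mp hβ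
  have haΦ := P.Δ_sub ha
  have hBa := P.B_root_pos haΦ
  set c : ℚ := 2 * P.B a β / P.B a a with hc
  have hc0 : c < 0 := by
    rw [hc, P.B_symm a β]
    have : 2 * P.B β a < 0 := by linarith
    exact div_neg_of_neg_of_pos this hBa
  have happ : P.refl a β = β - c • a := P.refl_apply (P.B_root_ne haΦ) β
  have hcoord : ∀ b ∈ P.Δ, P.coord (P.refl a β) b
      = P.coord β b - c * (if b = a then 1 else 0) := by
    intro b hb
    rw [happ, P.coord_sub _ _ hb, P.coord_smul _ _ hb, P.coord_simple ha hb]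
  have hge : ∀ b ∈ P.Δ, P.coord β b ≤ P.coord (P.refl a β) b := by
    intro b hb
    rw [hcoord b hb]
    split <;> nlinarith
  refine ⟨P.mem_posRoots.mpr ⟨P.refl_root_mem haΦ hβΦ, fun b hb => le_trans (hβpos b hb) (hge b hb)⟩, ?_, hge⟩
  rw [happ, P.ht_sub_smul _ _ ha]
  linarith

/-- coordinatewise domination -/
def domBy (u v : V) : Prop := ∀ a ∈ P.Δ, P.coord u a ≤ P.coord v a

lemma ht_le_of_domBy {u v : V} (h : P.domBy u v) : P.ht u ≤ P.ht v :=
  Finset.sum_le_sum h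

lemma eq_of_domBy_ht {u v : V} (h : P.domBy u v) (hht : P.ht v ≤ P.ht u) : u = v := by
  have hle := P.ht_le_of_domBy h
  have hz : ∑ a ∈ P.Δ, (P.coord v a - P.coord u a) = 0 := by
    rw [Finset.sum_sub_distrib]
    unfold ht at hht hle
    linarith
  have hall := (Finset.sum_eq_zero_iff_of_nonneg
    (fun a ha => by linarith [h a ha])).mp hz
  exact P.eq_of_coord_eq (fun a ha => by have := hall a ha; linarith)

/-- a maximal positive root -/
def IsMaxRoot (m : V) : Prop := m ∈ P.posRoots ∧ ∀ γ ∈ P.posRoots, P.domBy m γ → γ = m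

lemma exists_maxRoot_domBy {β : V} (hβ : β ∈ P.posRoots) :
    ∃ m, P.IsMaxRoot m ∧ P.domBy β m := by
  classical
  set T := P.posRoots.filter (fun γ => P.domBy β γ) with hT
  have hne : T.Nonempty := ⟨β, Finset.mem_filter.mpr ⟨hβ, fun a ha => le_rfl⟩⟩
  obtain ⟨m, hmT, hmax⟩ := T.exists_max_image P.ht hne
  obtain ⟨hm1, hm2⟩ := Finset.mem_filter.mp hmT
  refine ⟨m, ⟨hm1, ?_⟩, hm2⟩
  intro γ hγ hdom
  refine (P.eq_of_domBy_ht hdom ?_).symm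
  exact hmax γ (Finset.mem_filter.mpr ⟨hγ, fun a ha => le_trans (hm2 a ha) (hdom a ha)⟩)

lemma isMaxRoot_dominant {m : V} (hm : P.IsMaxRoot m) : ∀ a ∈ P.Δ, 0 ≤ P.B m a := by
  intro a ha
  by_contra h
  push_neg at h
  obtain ⟨hmem, hht, hge⟩ := P.reflect_up hm.1 ha h
  have heq := hm.2 _ hmem hge
  rw [heq] at hht
  exact lt_irrefl _ hht

lemma isMaxRoot_support {m : V} (hm : P.IsMaxRoot m) : ∀ a ∈ P.Δ, 0 < P.coord m a := by
  classical
  intro a ha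
  by_contra hcon
  push_neg at hcon
  obtain ⟨hmΦ, hmpos⟩ := P.mem_posRoots.mp hm.1
  have ha0 : P.coord m a = 0 := le_antisymm hcon (hmpos a ha)
  have hdomm := P.isMaxRoot_dominant hm
  -- orthogonality between support and non-support of m
  have orth : ∀ x ∈ P.Δ, P.coord m x ≠ 0 → ∀ y ∈ P.Δ, P.coord m y = 0 → P.B x y = 0 := by
    intro x hx hxne y hy hy0
    have hsum : P.B m y = ∑ z ∈ P.Δ, P.coord m z * P.B z y := P.B_eq_sum_left m y
    have hterms : ∀ z ∈ P.Δ, P.coord m z * P.B z y ≤ 0 := by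
      intro z hz
      by_cases hz0 : P.coord m z = 0
      · rw [hz0]; simp
      · have hzy : z ≠ y := fun h => hz0 (h ▸ hy0)
        have h1 := P.simple_B_nonpos hz hy hzy
        have h2 := hmpos z hz
        nlinarith
    have hsum0 : ∑ z ∈ P.Δ, P.coord m z * P.B z y = 0 := by
      have h1 : ∑ z ∈ P.Δ, P.coord m z * P.B z y ≤ 0 := Finset.sum_nonpos hterms
      have h2 := hdomm y hy
      linarith
    have hz := (Finset.sum_eq_zero_iff_of_nonpos hterms).mp hsum0 x hx
    rcases mul_eq_zero.mp hz with h | h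
    · exact absurd h hxne
    · exact h
  -- no positive root has mixed support
  have mixed : ∀ β ∈ P.posRoots,
      (∃ x ∈ P.Δ, P.coord m x ≠ 0 ∧ 0 < P.coord β x) →
      (∃ y ∈ P.Δ, P.coord m y = 0 ∧ 0 < P.coord β y) → False := by
    intro β₀ hβ₀ hx₀' hy₀'
    set S := P.posRoots.filter (fun β => (∃ x ∈ P.Δ, P.coord m x ≠ 0 ∧ 0 < P.coord β x) ∧
        (∃ y ∈ P.Δ, P.coord m y = 0 ∧ 0 < P.coord β y)) with hS
    have hSne : S.Nonempty := ⟨β₀, Finset.mem_filter.mpr ⟨hβ₀, hx₀', hy₀'⟩⟩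
    set D1 := P.Δ.filter (fun x => P.coord m x ≠ 0) with hD1
    obtain ⟨β, hβS, hβmin⟩ := S.exists_min_image (fun β => ∑ x ∈ D1, P.coord β x) hSne
    obtain ⟨hβpos', ⟨x₁, hx₁Δ, hx₁m, hx₁β⟩, ⟨y, hyΔ, hym, hyβ⟩⟩ := Finset.mem_filter.mp hβS
    obtain ⟨hβΦ, hβnn⟩ := P.mem_posRoots.mp hβpos'
    set β₁ : V := ∑ x ∈ D1, P.coord β x • x with hβ₁
    have hβ₁ne : β₁ ≠ 0 := by
      intro h0
      have hf : ∑ z ∈ P.Δ, (if P.coord m z ≠ 0 then P.coord β z else 0) • z = β₁ := by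
        rw [hβ₁, hD1, Finset.sum_filter]
        exact Finset.sum_congr rfl (fun z hz => by split <;> simp)
      have hext := P.coord_ext (f := fun z => if P.coord m z ≠ 0 then P.coord β z else 0)
        (g := fun _ => 0) (by rw [hf, h0]; simp)
      have h1 : (if P.coord m x₁ ≠ 0 then P.coord β x₁ else 0) = 0 := hext x₁ hx₁Δ
      rw [if_pos hx₁m] at h1
      rw [h1] at hx₁β
      exact lt_irrefl _ hx₁β
    have hβ₁pos : 0 < P.B β₁ β₁ := P.B_posdef β₁ hβ₁ne
    have hBzβ₁ : ∀ z ∈ P.Δ, P.coord m z = 0 → P.B z β₁ = 0 := by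
      intro z hz hz0
      rw [hβ₁, map_sum]
      apply Finset.sum_eq_zero
      intro x hx
      obtain ⟨hxΔ, hxm⟩ := Finset.mem_filter.mp hx
      rw [map_smul, smul_eq_mul, P.B_symm z x, orth x hxΔ hxm z hz hz0, mul_zero]
    have hBββ₁ : P.B β β₁ = P.B β₁ β₁ := by
      have h1 : P.B β β₁ = ∑ z ∈ P.Δ, P.coord β z * P.B z β₁ := P.B_eq_sum_left β β₁
      have h2 : P.B β₁ β₁ = ∑ z ∈ D1, P.coord β z * P.B z β₁ := by
        nth_rewrite 1 [hβ₁]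
        simp only [map_sum, LinearMap.sum_apply, Finset.sum_apply, map_smul,
          LinearMap.smul_apply, smul_eq_mul]
      rw [h1, h2]
      refine (Finset.sum_subset (Finset.filter_subset _ _) ?_).symm
      intro z hz hznot
      have hz0 : P.coord m z = 0 := by
        by_contra hne'
        exact hznot (Finset.mem_filter.mpr ⟨hz, hne'⟩)
      rw [hBzβ₁ z hz hz0, mul_zero]
    have hexp2 : P.B β β₁ = ∑ x ∈ D1, P.coord β x * P.B β x := by
      rw [hβ₁, map_sum]
      exact Finset.sum_congr rfl (fun x hx => by rw [map_smul, smul_eq_mul])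
    have hsumpos : 0 < ∑ x ∈ D1, P.coord β x * P.B β x := by
      rw [← hexp2, hBββ₁]
      exact hβ₁pos
    have hex : ∃ x ∈ D1, 0 < P.coord β x * P.B β x := by
      by_contra hc
      push_neg at hc
      linarith [Finset.sum_nonpos hc]
    obtain ⟨x₀, hx₀D1, hx₀pos⟩ := hex
    obtain ⟨hx₀Δ, hx₀m⟩ := Finset.mem_filter.mp hx₀D1
    have hcx₀ : 0 < P.coord β x₀ := by
      rcases (hβnn x₀ hx₀Δ).lt_or_eq with h | h
      · exact h
      · rw [← h, zero_mul] at hx₀pos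
        exact absurd hx₀pos (lt_irrefl 0)
    have hBβx₀ : 0 < P.B β x₀ := by nlinarith
    have hyne : y ≠ x₀ := fun h => hx₀m (h ▸ hym)
    have hβne : β ≠ x₀ := by
      intro h
      rw [h, P.coord_simple hx₀Δ hyΔ, if_neg hyne] at hyβ
      exact lt_irrefl _ hyβ
    have hsub : β - x₀ ∈ P.Φ := P.sub_mem_of_B_pos hβΦ (P.Δ_sub hx₀Δ) hBβx₀ hβne
    obtain ⟨n, hn⟩ := P.coord_int β hβΦ x₀ hx₀Δ
    have hn1 : (1:ℚ) ≤ P.coord β x₀ := by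
      rw [hn] at hcx₀ ⊢
      exact_mod_cast hcx₀
    have hsubpos : β - x₀ ∈ P.posRoots := by
      refine P.mem_posRoots.mpr ⟨hsub, fun b hb => ?_⟩
      rw [P.coord_sub _ _ hb, P.coord_simple hx₀Δ hb]
      split
      · next heq => rw [heq]; linarith
      · have := hβnn b hb; linarith
    have hyβ' : 0 < P.coord (β - x₀) y := by
      rw [P.coord_sub _ _ hyΔ, P.coord_simple hx₀Δ hyΔ, if_neg hyne]
      linarith
    by_cases hrem : ∃ x ∈ P.Δ, P.coord m x ≠ 0 ∧ 0 < P.coord (β - x₀) x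
    · have hmemS : β - x₀ ∈ S :=
        Finset.mem_filter.mpr ⟨hsubpos, hrem, ⟨y, hyΔ, hym, hyβ'⟩⟩
      have hhtred : ∑ x ∈ D1, P.coord (β - x₀) x = (∑ x ∈ D1, P.coord β x) - 1 := by
        rw [Finset.sum_congr rfl (fun x hx => by
          rw [P.coord_sub _ _ (Finset.mem_filter.mp hx).1,
            P.coord_simple hx₀Δ (Finset.mem_filter.mp hx).1]),
          Finset.sum_sub_distrib, Finset.sum_ite_eq' D1 x₀ (fun _ => (1:ℚ))]
        rw [if_pos hx₀D1]
      have := hβmin _ hmemS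
      rw [hhtred] at this
      linarith
    · push_neg at hrem
      have hcoordD1 : ∀ x ∈ P.Δ, P.coord m x ≠ 0 →
          P.coord β x = (if x = x₀ then 1 else 0) := by
        intro x hx hxm
        have h1 := hrem x hx hxm
        have h2 : 0 ≤ P.coord (β - x₀) x := (P.mem_posRoots.mp hsubpos).2 x hx
        have h0 : P.coord (β - x₀) x = 0 := le_antisymm h1 h2
        rw [P.coord_sub _ _ hx, P.coord_simple hx₀Δ hx, sub_eq_zero] at h0
        exact h0
      have hBβx₀' : P.B β x₀ = P.B x₀ x₀ := by
        have hterm : ∀ x ∈ P.Δ, P.coord β x * P.B x x₀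
            = (if x = x₀ then P.B x₀ x₀ else 0) := by
          intro x hx
          by_cases hxm : P.coord m x = 0
          · have hx0 : P.B x x₀ = 0 := by
              rw [P.B_symm]
              exact orth x₀ hx₀Δ hx₀m x hx hxm
            have hxx : x ≠ x₀ := fun hh => hx₀m (hh ▸ hxm)
            rw [hx0, mul_zero, if_neg hxx]
          · rw [hcoordD1 x hx hxm]
            split
            · next h => rw [h]; ring
            · ring
        rw [P.B_eq_sum_left β x₀, Finset.sum_congr rfl hterm,
          Finset.sum_ite_eq' P.Δ x₀ (fun _ => P.B x₀ x₀), if_pos hx₀Δ]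
      have hrefmem := P.reflect_mem x₀ (P.Δ_sub hx₀Δ) β hβΦ
      have hc2 : 2 * P.B x₀ β / P.B x₀ x₀ = 2 := by
        rw [P.B_symm x₀ β, hBβx₀', mul_div_assoc, div_self (P.B_root_ne (P.Δ_sub hx₀Δ)), mul_one]
      rw [hc2] at hrefmem
      have hβx₀1 : P.coord β x₀ = 1 := by
        have := hcoordD1 x₀ hx₀Δ hx₀m
        rwa [if_pos rfl] at this
      rcases P.pos_or_neg _ hrefmem with hp | hn
      · have := hp x₀ hx₀Δ
        rw [P.coord_sub _ _ hx₀Δ, P.coord_smul _ _ hx₀Δ, P.coord_self hx₀Δ, hβx₀1] at this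
        linarith
      · have := hn y hyΔ
        rw [P.coord_sub _ _ hyΔ, P.coord_smul _ _ hyΔ,
          P.coord_simple_ne hx₀Δ hyΔ hyne] at this
        linarith
  -- irreducibility
  set s := P.Φ.filter (fun β => ∀ y ∈ P.Δ, P.coord m y = 0 → P.coord β y = 0) with hs
  have hms : m ∈ s := Finset.mem_filter.mpr ⟨hmΦ, fun y hy h0 => h0⟩
  have horth : ∀ β' ∈ s, ∀ γ ∈ P.Φ, γ ∉ s → P.B β' γ = 0 := by
    intro β' hβ' γ hγ hγs
    obtain ⟨hβ'Φ, hβ'z⟩ := Finset.mem_filter.mp hβ'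
    have hγw : ∃ y ∈ P.Δ, P.coord m y = 0 ∧ P.coord γ y ≠ 0 := by
      by_contra hc
      push_neg at hc
      exact hγs (Finset.mem_filter.mpr ⟨hγ, fun y hy h0 => hc y hy h0⟩)
    obtain ⟨y, hyΔ, hym, hγy⟩ := hγw
    have hγD1 : ∀ x ∈ P.Δ, P.coord m x ≠ 0 → P.coord γ x = 0 := by
      by_cases hγpos : γ ∈ P.posRoots
      · intro x hx hxm
        obtain ⟨_, hγnn⟩ := P.mem_posRoots.mp hγpos
        by_contra hne
        exact mixed γ hγpos ⟨x, hx, hxm, lt_of_le_of_ne (hγnn x hx) (Ne.symm hne)⟩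
          ⟨y, hyΔ, hym, lt_of_le_of_ne (hγnn y hyΔ) (Ne.symm hγy)⟩
      · have hnγ := P.neg_mem_posRoots hγ hγpos
        intro x hx hxm
        obtain ⟨_, hγnn⟩ := P.mem_posRoots.mp hnγ
        by_contra hne
        have hx' : 0 < P.coord (-γ) x := by
          refine lt_of_le_of_ne (hγnn x hx) ?_
          rw [P.coord_neg _ hx]
          simpa using hne
        have hy' : 0 < P.coord (-γ) y := by
          refine lt_of_le_of_ne (hγnn y hyΔ) ?_
          rw [P.coord_neg _ hyΔ]
          simpa using hγy
        exact mixed (-γ) hnγ ⟨x, hx, hxm, hx'⟩ ⟨y, hyΔ, hym, hy'⟩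
    rw [P.B_eq_sum_left β' γ]
    apply Finset.sum_eq_zero
    intro x hx
    by_cases hxm : P.coord m x = 0
    · rw [hβ'z x hx hxm, zero_mul]
    · have hBxγ : P.B x γ = 0 := by
        rw [P.B_eq_sum_right γ x]
        apply Finset.sum_eq_zero
        intro x' hx'
        by_cases hx'm : P.coord m x' = 0
        · rw [orth x hx hxm x' hx' hx'm, mul_zero]
        · rw [hγD1 x' hx' hx'm, zero_mul]
      rw [hBxγ, mul_zero]
  have hsΦ := P.irreducible s (Finset.filter_subset _ _) ⟨m, hms⟩ horth
  have haΦ := P.Δ_sub ha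
  rw [← hsΦ] at haΦ
  obtain ⟨_, hz⟩ := Finset.mem_filter.mp haΦ
  have h1 := hz a ha ha0
  rw [P.coord_self ha] at h1
  exact one_ne_zero h1

lemma isMaxRoot_unique {m m' : V} (hm : P.IsMaxRoot m) (hm' : P.IsMaxRoot m') : m = m' := by
  by_contra hne
  obtain ⟨hmΦ, hmnn⟩ := P.mem_posRoots.mp hm.1
  obtain ⟨hm'Φ, hm'nn⟩ := P.mem_posRoots.mp hm'.1
  have hdom := P.isMaxRoot_dominant hm
  have hsupp' := P.isMaxRoot_support hm'
  have hBpos : 0 < P.B m m' := by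
    have hBmm : 0 < P.B m m := P.B_root_pos hmΦ
    have hBmm' : P.B m m = ∑ a ∈ P.Δ, P.coord m a * P.B m a := P.B_eq_sum_right m m
    have hex : ∃ a ∈ P.Δ, 0 < P.coord m a * P.B m a := by
      by_contra hc
      push_neg at hc
      rw [hBmm'] at hBmm
      linarith [Finset.sum_nonpos hc]
    obtain ⟨a₀, ha₀, hpos⟩ := hex
    have hBma₀ : 0 < P.B m a₀ := by
      rcases (hdom a₀ ha₀).lt_or_eq with h | h
      · exact h
      · rw [← h, mul_zero] at hpos
        exact absurd hpos (lt_irrefl 0)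
    have hBsum : P.B m m' = ∑ a ∈ P.Δ, P.coord m' a * P.B m a := P.B_eq_sum_right m' m
    rw [hBsum]
    exact Finset.sum_pos' (fun a ha => mul_nonneg (hm'nn a ha) (hdom a ha))
      ⟨a₀, ha₀, mul_pos (hsupp' a₀ ha₀) hBma₀⟩
  have hsub := P.sub_mem_of_B_pos hmΦ hm'Φ hBpos hne
  rcases P.pos_or_neg _ hsub with hp | hn
  · refine hne (hm'.2 m hm.1 (fun a ha => ?_))
    have := hp a ha
    rw [P.coord_sub _ _ ha] at this
    linarith
  · refine hne (hm.2 m' hm'.1 (fun a ha => ?_)).symm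
    have := hn a ha
    rw [P.coord_sub _ _ ha] at this
    linarith

lemma exists_highestRoot' (hΔ : P.Δ.Nonempty) :
    ∃ h, h ∈ P.Φ ∧ ∀ β ∈ P.posRoots, ∀ a ∈ P.Δ, P.coord β a ≤ P.coord h a := by
  obtain ⟨a, ha⟩ := hΔ
  obtain ⟨m, hmmax, _⟩ := P.exists_maxRoot_domBy (P.simple_mem_posRoots ha)
  refine ⟨m, (P.mem_posRoots.mp hmmax.1).1, fun β hβ b hb => ?_⟩
  obtain ⟨m', hm'max, hdom⟩ := P.exists_maxRoot_domBy hβ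
  have := hdom b hb
  rwa [P.isMaxRoot_unique hm'max hmmax] at this

lemma exists_simple_B_pos {β : V} (hβ : β ∈ P.posRoots) :
    ∃ a ∈ P.Δ, 0 < P.coord β a ∧ 0 < P.B β a := by
  obtain ⟨hβΦ, hβnn⟩ := P.mem_posRoots.mp hβ
  have hpos : 0 < P.B β β := P.B_root_pos hβΦ
  rw [P.B_eq_sum_right β β] at hpos
  have hex : ∃ a ∈ P.Δ, 0 < P.coord β a * P.B β a := by
    by_contra hc
    push_neg at hc
    linarith [Finset.sum_nonpos hc]
  obtain ⟨a, ha, h⟩ := hex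
  have hc : 0 < P.coord β a := by
    rcases (hβnn a ha).lt_or_eq with h1 | h1
    · exact h1
    · rw [← h1, zero_mul] at h
      exact absurd h (lt_irrefl 0)
  exact ⟨a, ha, hc, by nlinarith⟩

lemma posRoot_descent {β : V} (hβ : β ∈ P.posRoots) (hβΔ : β ∉ P.Δ) :
    ∃ a ∈ P.Δ, 0 < 2 * P.B a β / P.B a a ∧ P.refl a β ∈ P.posRoots ∧
      P.ht (P.refl a β) < P.ht β := by
  obtain ⟨hβΦ, hβnn⟩ := P.mem_posRoots.mp hβ
  obtain ⟨a, ha, hca, hBa⟩ := P.exists_simple_B_pos hβ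
  have haΦ := P.Δ_sub ha
  have hp : 0 < 2 * P.B a β / P.B a a := by
    rw [P.B_symm a β]
    have h2 : 0 < 2 * P.B β a := by linarith
    exact div_pos h2 (P.B_root_pos haΦ)
  refine ⟨a, ha, hp, ?_, ?_⟩
  · have hmem : P.refl a β ∈ P.Φ := P.refl_root_mem haΦ hβΦ
    rcases P.pos_or_neg _ hmem with hpos | hneg
    · exact P.mem_posRoots.mpr ⟨hmem, hpos⟩
    · exfalso
      have happ := P.refl_apply (P.B_root_ne haΦ) β
      have hcoords : ∀ b ∈ P.Δ, b ≠ a → P.coord β b = 0 := by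
        intro b hb hba
        have h1 := hneg b hb
        rw [happ, P.coord_sub _ _ hb, P.coord_smul _ _ hb,
          P.coord_simple_ne ha hb hba, mul_zero, sub_zero] at h1
        exact le_antisymm h1 (hβnn b hb)
      have hβa : β = P.coord β a • a := by
        apply P.eq_of_coord_eq
        intro b hb
        rw [P.coord_smul _ _ hb, P.coord_simple ha hb]
        by_cases hba : b = a
        · rw [if_pos hba, mul_one, hba]
        · rw [if_neg hba, mul_zero]
          exact hcoords b hb hba
      rcases P.reduced a haΦ (P.coord β a) (hβa ▸ hβΦ) with h1 | h1
      · rw [h1, one_smul] at hβa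
        exact hβΔ (hβa ▸ ha)
      · rw [h1] at hca
        norm_num at hca
  · rw [P.refl_apply (P.B_root_ne haΦ), P.ht_sub_smul _ _ ha]
    linarith

lemma coroot_coroot {β : V} (hβ : β ∈ P.Φ) : P.coroot (P.coroot β) = β := by
  have hne := P.B_root_ne hβ
  unfold coroot
  simp only [map_smul, LinearMap.smul_apply, smul_eq_mul, smul_smul]
  rw [show 2 / (2 / P.B β β * (2 / P.B β β * P.B β β)) * (2 / P.B β β) = 1 by
    field_simp]
  rw [one_smul]

lemma coroot_ne_zero {β : V} (hβ : β ∈ P.Φ) : P.coroot β ≠ 0 := by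
  unfold coroot
  intro h
  rcases smul_eq_zero.mp h with h1 | h1
  · rw [div_eq_zero_iff] at h1
    rcases h1 with h2 | h2
    · norm_num at h2
    · exact P.B_root_ne hβ h2
  · exact P.root_ne_zero hβ h1

lemma coroot_neg (β : V) : P.coroot (-β) = -P.coroot β := by
  unfold coroot
  simp

lemma B_coroot_coroot (β γ : V) :
    P.B (P.coroot β) (P.coroot γ) = (2 / P.B β β) * (2 / P.B γ γ) * P.B β γ := by
  unfold coroot
  simp only [map_smul, LinearMap.smul_apply, smul_eq_mul]
  ring

lemma corootMult_eq {β : V} (hβ : β ∈ P.Φ) {a : V} (ha : a ∈ P.Δ) :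
    P.corootMult β a = P.coord β a * P.B a a / P.B β β := by
  unfold corootMult coroot
  rw [P.coord_smul _ _ ha]
  field_simp [P.B_root_ne hβ]

lemma corootMult_neg {β : V} (hβ : β ∈ P.Φ) {a : V} (ha : a ∈ P.Δ) :
    P.corootMult (-β) a = -P.corootMult β a := by
  unfold corootMult
  rw [P.coroot_neg, P.coord_neg _ ha]
  ring

lemma corootMult_int_aux (N : ℕ) : ∀ β ∈ P.posRoots,
    (P.posRoots.filter (fun γ => P.ht γ < P.ht β)).card ≤ N →
    ∀ a ∈ P.Δ, ∃ n : ℤ, P.corootMult β a = (n : ℚ) := by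
  classical
  induction N with
  | zero =>
      intro β hβ hcard a ha
      by_cases hβΔ : β ∈ P.Δ
      · rw [P.corootMult_eq (P.Δ_sub hβΔ) ha]
        by_cases hab : a = β
        · subst hab
          refine ⟨1, ?_⟩
          rw [P.coord_self ha, one_mul, div_self (P.B_root_ne (P.Δ_sub hβΔ))]
          norm_num
        · refine ⟨0, ?_⟩
          rw [P.coord_simple_ne hβΔ ha hab]
          simp
      · exfalso
        obtain ⟨b, hb, hp, hmem, hht⟩ := P.posRoot_descent hβ hβΔ
        have : P.refl b β ∈ P.posRoots.filter (fun γ => P.ht γ < P.ht β) :=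
          Finset.mem_filter.mpr ⟨hmem, hht⟩
        have := Finset.card_pos.mpr ⟨_, this⟩
        omega
  | succ N ih =>
      intro β hβ hcard a ha
      by_cases hβΔ : β ∈ P.Δ
      · rw [P.corootMult_eq (P.Δ_sub hβΔ) ha]
        by_cases hab : a = β
        · subst hab
          refine ⟨1, ?_⟩
          rw [P.coord_self ha, one_mul, div_self (P.B_root_ne (P.Δ_sub hβΔ))]
          norm_num
        · refine ⟨0, ?_⟩
          rw [P.coord_simple_ne hβΔ ha hab]
          simp
      · obtain ⟨b, hb, hp, hmem, hht⟩ := P.posRoot_descent hβ hβΔ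
        obtain ⟨hβΦ, _⟩ := P.mem_posRoots.mp hβ
        have hbΦ := P.Δ_sub hb
        set γ := P.refl b β with hγ
        have hγΦ : γ ∈ P.Φ := P.refl_root_mem hbΦ hβΦ
        -- the filtered set for γ is strictly smaller
        have hsubset : P.posRoots.filter (fun δ => P.ht δ < P.ht γ) ⊆
            (P.posRoots.filter (fun δ => P.ht δ < P.ht β)).erase γ := by
          intro δ hδ
          obtain ⟨hδ1, hδ2⟩ := Finset.mem_filter.mp hδ
          refine Finset.mem_erase.mpr ⟨?_, Finset.mem_filter.mpr ⟨hδ1, lt_trans hδ2 hht⟩⟩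
          intro h
          rw [h] at hδ2
          exact lt_irrefl _ hδ2
        have hγin : γ ∈ P.posRoots.filter (fun δ => P.ht δ < P.ht β) :=
          Finset.mem_filter.mpr ⟨hmem, hht⟩
        have hcard' : (P.posRoots.filter (fun δ => P.ht δ < P.ht γ)).card ≤ N := by
          have h1 := Finset.card_le_card hsubset
          have h2 := Finset.card_erase_of_mem hγin
          omega
        -- q = 2 B β b / B β β is a positive integer
        obtain ⟨q, hq⟩ := P.integral β hβΦ b hbΦ
        have hq1 : (1:ℚ) ≤ (q:ℚ) := by
          have hnum : 0 < P.B b β := by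
            rcases div_pos_iff.mp hp with ⟨h1, _⟩ | ⟨_, h2⟩
            · linarith
            · exact absurd (P.B_root_pos hbΦ) (by linarith)
          have h0 : 0 < 2 * P.B β b / P.B β β := by
            rw [P.B_symm β b]
            exact div_pos (by linarith) (P.B_root_pos hβΦ)
          rw [hq] at h0
          have hq0 : 0 < q := by exact_mod_cast h0
          exact_mod_cast hq0
        -- relation between corootMult of β and γ
        have hlen : P.B γ γ = P.B β β := P.refl_isometry b β β
        have hrel : ∀ c ∈ P.Δ, P.corootMult β c
            = P.corootMult γ c + (q:ℚ) * (if c = b then 1 else 0) := by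
          intro c hc
          rw [P.corootMult_eq hβΦ hc, P.corootMult_eq hγΦ hc, hlen, hγ,
            P.refl_apply (P.B_root_ne hbΦ), P.coord_sub _ _ hc, P.coord_smul _ _ hc,
            P.coord_simple hb hc]
          rw [← hq]
          by_cases hcb : c = b
          · subst hcb
            simp only [if_pos rfl, ↓reduceIte, mul_one]
            rw [P.B_symm β c]
            field_simp [P.B_root_ne hβΦ, P.B_root_ne hbΦ]
            ring
          · simp only [if_neg hcb]
            ring
        obtain ⟨n, hn⟩ := ih γ hmem hcard' a ha
        by_cases hab : a = b
        · refine ⟨n + q, ?_⟩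
          rw [hrel a ha, hn, if_pos hab]
          push_cast
          ring
        · refine ⟨n, ?_⟩
          rw [hrel a ha, hn, if_neg hab]
          push_cast
          ring

lemma corootMult_int' {β : V} (hβ : β ∈ P.Φ) {a : V} (ha : a ∈ P.Δ) :
    ∃ n : ℤ, P.corootMult β a = (n : ℚ) := by
  by_cases hpos : β ∈ P.posRoots
  · exact P.corootMult_int_aux (P.posRoots.filter (fun γ => P.ht γ < P.ht β)).card β hpos
      le_rfl a ha
  · have hneg := P.neg_mem_posRoots hβ hpos
    obtain ⟨n, hn⟩ := P.corootMult_int_aux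
      (P.posRoots.filter (fun γ => P.ht γ < P.ht (-β))).card (-β) hneg le_rfl a ha
    refine ⟨-n, ?_⟩
    rw [P.corootMult_neg hβ ha] at hn
    push_cast at hn ⊢
    linarith

section DualSection
variable [DecidableEq V]

lemma coroot_injOn {β γ : V} (hβ : β ∈ P.Φ) (hγ : γ ∈ P.Φ)
    (h : P.coroot β = P.coroot γ) : β = γ := by
  have h1 := P.coroot_coroot hβ
  have h2 := P.coroot_coroot hγ
  rw [← h1, ← h2, h]

lemma coroot_scale_back {β : V} (hβ : β ∈ P.Φ) : β = (P.B β β / 2) • P.coroot β := by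
  unfold coroot
  rw [smul_smul, show P.B β β / 2 * (2 / P.B β β) = 1 by field_simp [P.B_root_ne hβ], one_smul]

/-- the dual root system -/
noncomputable def dual : RootSystemBase V where
  B := P.B
  B_symm := P.B_symm
  B_posdef := P.B_posdef
  Φ := P.Φ.image P.coroot
  zero_notMem := by
    intro h
    obtain ⟨β, hβ, h0⟩ := Finset.mem_image.mp h
    exact P.coroot_ne_zero hβ h0
  span_top := by
    rw [eq_top_iff, ← P.span_top, Submodule.span_le]
    intro β hβ
    rw [Finset.mem_coe] at hβ
    rw [SetLike.mem_coe, P.coroot_scale_back hβ]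
    exact Submodule.smul_mem _ _
      (Submodule.subset_span (Finset.mem_coe.mpr (Finset.mem_image_of_mem _ hβ)))
  reflect_mem := by
    intro u hu v hv
    obtain ⟨β, hβ, rfl⟩ := Finset.mem_image.mp hu
    obtain ⟨γ, hγ, rfl⟩ := Finset.mem_image.mp hv
    have hc : 2 * P.B (P.coroot β) (P.coroot γ) / P.B (P.coroot β) (P.coroot β)
        = 2 * P.B β γ / P.B γ γ := by
      rw [P.B_coroot_coroot, P.B_coroot_coroot]
      field_simp [P.B_root_ne hβ, P.B_root_ne hγ]
    rw [hc]
    have hiso : P.B (P.refl β γ) (P.refl β γ) = P.B γ γ := P.refl_isometry β γ γ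
    have key : P.coroot γ - (2 * P.B β γ / P.B γ γ) • P.coroot β = P.coroot (P.refl β γ) := by
      rw [show P.coroot (P.refl β γ) = (2 / P.B γ γ) • (P.refl β γ) by
        unfold coroot; rw [hiso]]
      rw [P.refl_apply (P.B_root_ne hβ)]
      unfold coroot
      module
    rw [key]
    exact Finset.mem_image_of_mem _ (P.refl_root_mem hβ hγ)
  integral := by
    intro u hu v hv
    obtain ⟨β, hβ, rfl⟩ := Finset.mem_image.mp hu
    obtain ⟨γ, hγ, rfl⟩ := Finset.mem_image.mp hv
    have hc : 2 * P.B (P.coroot β) (P.coroot γ) / P.B (P.coroot β) (P.coroot β)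
        = 2 * P.B γ β / P.B γ γ := by
      rw [P.B_coroot_coroot, P.B_coroot_coroot, P.B_symm β γ]
      field_simp [P.B_root_ne hβ, P.B_root_ne hγ]
    rw [hc]
    exact P.integral γ hγ β hβ
  reduced := by
    intro u hu c hc
    obtain ⟨β, hβ, rfl⟩ := Finset.mem_image.mp hu
    obtain ⟨γ, hγ, hγeq⟩ := Finset.mem_image.mp hc
    have hback : γ = (P.B γ γ / 2 * c * (2 / P.B β β)) • β := by
      have h1 := P.coroot_scale_back hγ
      rw [hγeq, smul_smul] at h1
      unfold coroot at h1
      rw [smul_smul] at h1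
      exact h1
    rcases P.reduced β hβ _ (hback ▸ hγ) with h | h
    · left
      have hγβ : γ = β := by rw [hback, h, one_smul]
      rw [hγβ] at h
      have hne := P.B_root_ne hβ
      field_simp at h
      linarith
    · right
      have hγβ : γ = -β := by rw [hback, h, neg_one_smul]
      have hBB : P.B γ γ = P.B β β := by rw [hγβ]; simp
      rw [hBB] at h
      have hne := P.B_root_ne hβ
      field_simp at h
      linarith
  irreducible := by
    intro s hsub hne horth
    have hΦeq : P.Φ.filter (fun β => P.coroot β ∈ s) = P.Φ := by
      apply P.irreducible _ (Finset.filter_subset _ _)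
      · obtain ⟨u, hu⟩ := hne
        obtain ⟨β, hβ, rfl⟩ := Finset.mem_image.mp (hsub hu)
        exact ⟨β, Finset.mem_filter.mpr ⟨hβ, hu⟩⟩
      · intro β hβ γ hγ hγs
        obtain ⟨hβΦ, hβs⟩ := Finset.mem_filter.mp hβ
        have hγs' : P.coroot γ ∉ s := fun h => hγs (Finset.mem_filter.mpr ⟨hγ, h⟩)
        have h0 := horth _ hβs _ (Finset.mem_image_of_mem _ hγ) hγs'
        rw [P.B_coroot_coroot] at h0
        rcases mul_eq_zero.mp h0 with h1 | h1
        · exfalso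
          rcases mul_eq_zero.mp h1 with h2 | h2 <;>
          · rw [div_eq_zero_iff] at h2
            rcases h2 with h3 | h3
            · norm_num at h3
            · first
                | exact P.B_root_ne hβΦ h3
                | exact P.B_root_ne hγ h3
        · exact h1
    apply Finset.Subset.antisymm hsub
    intro u hu
    obtain ⟨γ, hγ, rfl⟩ := Finset.mem_image.mp hu
    have hγ' : γ ∈ P.Φ.filter (fun β => P.coroot β ∈ s) := by rw [hΦeq]; exact hγ
    exact (Finset.mem_filter.mp hγ').2
  Δ := P.Δ.image P.coroot
  Δ_sub := Finset.image_subset_image P.Δ_sub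
  Δ_indep := by
    have hsc : ∀ y : {x : V // x ∈ P.Δ}, (2 : ℚ) / P.B y.1 y.1 ≠ 0 := fun y =>
      div_ne_zero two_ne_zero (P.B_root_ne (P.Δ_sub y.2))
    set w : {x : V // x ∈ P.Δ} → ℚˣ := fun y => Units.mk0 _ (hsc y) with hwdef
    have ind1 : LinearIndependent ℚ (fun y : {x : V // x ∈ P.Δ} => P.coroot y.1) := by
      have h := P.Δ_indep.units_smul w
      have heq : (w • (Subtype.val : {x : V // x ∈ P.Δ} → V))
          = (fun y : {x : V // x ∈ P.Δ} => P.coroot y.1) := by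
        funext y
        show (w y : ℚ) • y.1 = P.coroot y.1
        rfl
      rwa [heq] at h
    set e : {x : V // x ∈ P.Δ.image P.coroot} → {x : V // x ∈ P.Δ} := fun x =>
      ⟨P.coroot x.1, by
        obtain ⟨α, hα, hx⟩ := Finset.mem_image.mp x.2
        rw [← hx, P.coroot_coroot (P.Δ_sub hα)]
        exact hα⟩ with hedef
    have he : ∀ x, P.coroot (e x).1 = x.1 := by
      intro x
      obtain ⟨α, hα, hx⟩ := Finset.mem_image.mp x.2
      show P.coroot (P.coroot x.1) = x.1
      rw [← hx, P.coroot_coroot (P.Δ_sub hα)]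
    have heinj : Function.Injective e := by
      intro x y hxy
      have hcc : P.coroot (e x).1 = P.coroot (e y).1 := by rw [hxy]
      rw [he x, he y] at hcc
      exact Subtype.ext hcc
    have ind2 := ind1.comp e heinj
    have hfin : ((fun y : {x : V // x ∈ P.Δ} => P.coroot y.1) ∘ e)
        = (Subtype.val : {x : V // x ∈ P.Δ.image P.coroot} → V) := funext fun x => he x
    rwa [hfin] at ind2
  coord := fun v u => P.coord v (P.coroot u) * (P.B (P.coroot u) (P.coroot u) / 2)
  coord_spec := by
    intro v
    rw [Finset.sum_image (fun α hα α' hα' h => P.coroot_injOn (P.Δ_sub hα) (P.Δ_sub hα') h)]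
    beta_reduce
    conv_lhs => rw [P.coord_spec v]
    apply Finset.sum_congr rfl
    intro α hα
    rw [P.coroot_coroot (P.Δ_sub hα)]
    unfold coroot
    rw [smul_smul, show P.coord v α * (P.B α α / 2) * (2 / P.B α α) = P.coord v α by
      field_simp [P.B_root_ne (P.Δ_sub hα)]]
  coord_int := by
    intro u hu w hw
    obtain ⟨β, hβ, rfl⟩ := Finset.mem_image.mp hu
    obtain ⟨α, hα, rfl⟩ := Finset.mem_image.mp hw
    beta_reduce
    rw [P.coroot_coroot (P.Δ_sub hα)]
    exact P.corootMult_int' hβ hα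
  pos_or_neg := by
    intro u hu
    obtain ⟨β, hβ, rfl⟩ := Finset.mem_image.mp hu
    rcases P.pos_or_neg β hβ with hp | hn
    · left
      intro w hw
      obtain ⟨α, hα, rfl⟩ := Finset.mem_image.mp hw
      beta_reduce
      rw [P.coroot_coroot (P.Δ_sub hα)]
      have heq : P.coord (P.coroot β) α * (P.B α α / 2) = P.corootMult β α := rfl
      rw [heq, P.corootMult_eq hβ hα]
      have h1 := hp α hα
      have h2 := P.B_root_pos (P.Δ_sub hα)
      have h3 := P.B_root_pos hβ
      positivity
    · right
      intro w hw
      obtain ⟨α, hα, rfl⟩ := Finset.mem_image.mp hw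
      beta_reduce
      rw [P.coroot_coroot (P.Δ_sub hα)]
      have heq : P.coord (P.coroot β) α * (P.B α α / 2) = P.corootMult β α := rfl
      rw [heq, P.corootMult_eq hβ hα]
      have h1 := hn α hα
      have h2 := P.B_root_pos (P.Δ_sub hα)
      have h3 := P.B_root_pos hβ
      have : P.coord β α * P.B α α ≤ 0 := by nlinarith
      exact div_nonpos_of_nonpos_of_nonneg this (le_of_lt h3)

lemma exists_dualHighest (hΔ : P.Δ.Nonempty) :
    ∃ h₂, h₂ ∈ P.Φ ∧ ∀ β ∈ P.posRoots, ∀ α ∈ P.Δ, P.corootMult β α ≤ P.corootMult h₂ α := by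
  set D := P.dual with hD
  have hDΔ : D.Δ.Nonempty := by
    obtain ⟨a, ha⟩ := hΔ
    exact ⟨P.coroot a, Finset.mem_image_of_mem _ ha⟩
  obtain ⟨hd, hdΦ, hmax⟩ := D.exists_highestRoot' hDΔ
  have hdΦ' : hd ∈ P.Φ.image P.coroot := hdΦ
  obtain ⟨h₂, hh₂Φ, hh₂⟩ := Finset.mem_image.mp hdΦ'
  refine ⟨h₂, hh₂Φ, ?_⟩
  intro β hβ α hα
  obtain ⟨hβΦ, hβnn⟩ := P.mem_posRoots.mp hβ
  have hDcoord : ∀ γ ∈ P.Φ, ∀ a ∈ P.Δ,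
      D.coord (P.coroot γ) (P.coroot a) = P.corootMult γ a := by
    intro γ hγ a ha
    show P.coord (P.coroot γ) (P.coroot (P.coroot a))
        * (P.B (P.coroot (P.coroot a)) (P.coroot (P.coroot a)) / 2) = _
    rw [P.coroot_coroot (P.Δ_sub ha)]
    rfl
  have hβD : P.coroot β ∈ D.posRoots := by
    refine D.mem_posRoots.mpr ⟨Finset.mem_image_of_mem _ hβΦ, ?_⟩
    intro u hu
    have hu' : u ∈ P.Δ.image P.coroot := hu
    obtain ⟨a, ha, rfl⟩ := Finset.mem_image.mp hu'
    rw [hDcoord β hβΦ a ha, P.corootMult_eq hβΦ ha]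
    have h1 := hβnn a ha
    have h2 := P.B_root_pos (P.Δ_sub ha)
    have h3 := P.B_root_pos hβΦ
    positivity
  have hle := hmax (P.coroot β) hβD (P.coroot α) (Finset.mem_image_of_mem _ hα)
  rw [hDcoord β hβΦ α hα, ← hh₂, hDcoord h₂ hh₂Φ α hα] at hle
  exact hle

end DualSection

end RootSystemBase

open RootSystemBase in
/-- If `α ∈ Δ` is special or co-special then `dom(α) = dom_α(α)`:
there exists `w ∈ W_α` such that `w α` is `Δ`-dominant. -/
theorem leviDominant_of_special_or_cospecial
    {V : Type*} [AddCommGroup V] [Module ℚ V] [FiniteDimensional ℚ V]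
    (P : RootSystemBase V) (α : V) (hα : α ∈ P.Δ)
    (hsp : P.IsSpecial α ∨ P.IsCospecial α) :
    ∃ w ∈ P.leviWeyl α, P.IsDominant (w α) := by
  classical
  set O := P.Φ.filter (fun v => ∃ w ∈ P.leviWeyl α, w α = v) with hO
  have hαΦ := P.Δ_sub hα
  have hαO : α ∈ O := Finset.mem_filter.mpr ⟨hαΦ, 1, Subgroup.one_mem _, rfl⟩
  obtain ⟨v, hvO, hvmax⟩ := O.exists_max_image P.ht ⟨α, hαO⟩
  obtain ⟨hvΦ, w, hw, hwα⟩ := Finset.mem_filter.mp hvO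
  refine ⟨w, hw, ?_⟩
  suffices hv : P.IsDominant v by rwa [← hwα] at hv
  have hvα : P.coord v α = 1 := by rw [← hwα, P.levi_coord hα hw, P.coord_self hα]
  have hvpos : v ∈ P.posRoots := by
    refine P.mem_posRoots.mpr ⟨hvΦ, ?_⟩
    rcases P.pos_or_neg v hvΦ with hp | hn
    · exact hp
    · exfalso
      have := hn α hα
      rw [hvα] at this
      linarith
  have hlen : P.B v v = P.B α α := by
    rw [← hwα]
    exact P.weyl_isometry (P.levi_le_weyl α hw) α α
  intro a ha
  by_cases haα : a = α
  · subst haα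
    by_contra hneg
    push_neg at hneg
    have hc : 2 * P.B a v / P.B a a < 0 :=
      div_neg_of_neg_of_pos (by rw [P.B_symm a v]; linarith) (P.B_root_pos hαΦ)
    obtain ⟨n, hn⟩ := P.integral a hαΦ v hvΦ
    have hnneg : n < 0 := by
      rw [hn] at hc
      exact_mod_cast hc
    have hn1 : (n:ℚ) ≤ -1 := by
      have : n ≤ -1 := by omega
      exact_mod_cast this
    set β' := v - (2 * P.B a v / P.B a a) • a with hβ'
    have hβ'Φ : β' ∈ P.Φ := P.reflect_mem a hαΦ v hvΦ
    have hβ'coord : ∀ b ∈ P.Δ, P.coord β' b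
        = P.coord v b - (n:ℚ) * (if b = a then 1 else 0) := by
      intro b hb
      rw [hβ', P.coord_sub _ _ hb, P.coord_smul _ _ hb, P.coord_simple hα hb, hn]
    have hβ'α : P.coord β' a = 1 - n := by
      rw [hβ'coord a hα, if_pos rfl, hvα]
      ring
    have hβ'pos : β' ∈ P.posRoots := by
      refine P.mem_posRoots.mpr ⟨hβ'Φ, fun b hb => ?_⟩
      rw [hβ'coord b hb]
      by_cases hba : b = a
      · rw [if_pos hba, hba, hvα]
        linarith
      · rw [if_neg hba, mul_zero, sub_zero]
        exact (P.mem_posRoots.mp hvpos).2 b hb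
    have hβ'len : P.B β' β' = P.B a a := by
      rw [hβ', ← P.refl_apply (P.B_root_ne hαΦ), P.refl_isometry a v v, hlen]
    rcases hsp with hspec | hcosp
    · obtain ⟨h, hhΦ, hmax'⟩ := P.exists_highestRoot' ⟨a, hα⟩
      have h1 := hspec.2 h ⟨hhΦ, hmax'⟩
      have h2 := hmax' β' hβ'pos a hα
      rw [hβ'α, h1] at h2
      linarith
    · obtain ⟨h₂, hh₂Φ, hmax'⟩ := P.exists_dualHighest ⟨a, hα⟩
      have h1 := hcosp.2 h₂ ⟨hh₂Φ, hmax'⟩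
      have h2 := hmax' β' hβ'pos a hα
      rw [h1, P.corootMult_eq hβ'Φ hα, hβ'len, hβ'α, mul_div_assoc,
        div_self (P.B_root_ne hαΦ), mul_one] at h2
      linarith
  · by_contra hneg
    push_neg at hneg
    have haΦ := P.Δ_sub ha
    have hrefl : P.refl a v ∈ O := by
      refine Finset.mem_filter.mpr ⟨P.refl_root_mem haΦ hvΦ, P.refl a * w,
        Subgroup.mul_mem _ (Subgroup.subset_closure ⟨a, ha, haα, rfl⟩) hw, ?_⟩
      show P.refl a (w α) = _
      rw [hwα]
    have hht := hvmax _ hrefl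
    rw [P.refl_apply (P.B_root_ne haΦ), P.ht_sub_smul _ _ ha] at hht
    have hc : 2 * P.B a v / P.B a a < 0 :=
      div_neg_of_neg_of_pos (by rw [P.B_symm a v]; linarith) (P.B_root_pos haΦ)
    linarith
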